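/- For all real t ≥ π/2 and all real p with 2 ≤ p ≤ 3, ln(t)/t^{p+1} ≥ 1.75·(2/π)^p·(1/t⁴). -/

import Mathlib

open Real

lemma key_log_bound : Real.log (π/2) ≥ 14 / π^3 := by
  have hpi : (3.14159265358979323846 : ℝ) < π := Real.pi_gt_d20
  have hpi2 : (1.5707963 : ℝ) < π/2 := by linarith
  have hq : Real.exp (0.451523 : ℝ) ≤ π/2 := by
    have h := Real.exp_bound' (x := (0.451523 : ℝ)) (by norm_num) (by norm_num)
      (n := 7) (by norm_num)
    have hsum : (∑ m ∈ Finset.range 7, (0.451523 : ℝ) ^ m / m.factorial) +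
        (0.451523 : ℝ) ^ 7 * (7 + 1) / ((7 : ℕ).factorial * 7) ≤ 1.5707963 := by
      simp only [Finset.sum_range_succ, Finset.sum_range_zero]
      norm_num [Nat.factorial]
    linarith
  have hlog : (0.451523 : ℝ) ≤ Real.log (π/2) := by
    rw [Real.le_log_iff_exp_le (by positivity)]
    exact hq
  have hpi3 : (14 : ℝ) / π^3 ≤ 0.451523 := by
    rw [div_le_iff₀ (by positivity)]
    nlinarith [hpi, Real.pi_pos, sq_nonneg (π - 3.14159265358979323846)]
  linarith

theorem stmt_15 (t p : ℝ) (ht : π/2 ≤ t) (hp1 : 2 ≤ p) (hp2 : p ≤ 3) :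
    Real.log t / t ^ (p + 1) ≥ 1.75 * (2/π) ^ p * (1 / t^4) := by
  have hpi : (0:ℝ) < π := Real.pi_pos
  have hb : (0:ℝ) < π/2 := by positivity
  have ht0 : (0:ℝ) < t := lt_of_lt_of_le hb ht
  have hb1 : (1:ℝ) < π/2 := by
    have := Real.pi_gt_d6; linarith
  have ht1 : (1:ℝ) ≤ t := le_trans hb1.le ht
  -- key: log t * t^(3-p) ≥ 1.75 * (2/π)^p
  have hlogb : (0:ℝ) ≤ Real.log (π/2) := Real.log_nonneg hb1.le
  have h1 : Real.log (π/2) ≤ Real.log t := Real.log_le_log hb ht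
  have h2 : (π/2) ^ (3 - p) ≤ t ^ (3 - p) :=
    Real.rpow_le_rpow hb.le ht (by linarith)
  have h2pos : (0:ℝ) < (π/2) ^ (3 - p) := Real.rpow_pos_of_pos hb _
  have hmul : Real.log (π/2) * (π/2) ^ (3 - p) ≤ Real.log t * t ^ (3 - p) :=
    mul_le_mul h1 h2 h2pos.le (le_trans hlogb h1)
  have hbase : (1.75 : ℝ) * (2/π) ^ p ≤ Real.log (π/2) * (π/2) ^ (3 - p) := by
    have hsplit : (π/2) ^ (3 - p) = (π/2) ^ (3:ℝ) * ((π/2) ^ p)⁻¹ := by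
      rw [← Real.rpow_neg hb.le, ← Real.rpow_add hb]
      ring_nf
    have hinv : ((2:ℝ)/π) ^ p = ((π/2) ^ p)⁻¹ := by
      rw [← Real.inv_rpow hb.le]
      norm_num
    have h3 : (π/2) ^ (3:ℝ) = π^3 / 8 := by
      rw [show ((3:ℝ)) = ((3:ℕ):ℝ) by norm_num, Real.rpow_natCast]
      ring
    rw [hsplit, hinv, h3]
    have hppos : (0:ℝ) < ((π/2) ^ p)⁻¹ := by
      positivity
    have hk : (14:ℝ) ≤ Real.log (π/2) * π^3 := by
      have := key_log_bound
      rw [ge_iff_le, div_le_iff₀ (by positivity)] at this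
      linarith
    nlinarith [hk, hppos, Real.pi_pos]
  have hkey : (1.75 : ℝ) * (2/π) ^ p ≤ Real.log t * t ^ (3 - p) :=
    le_trans hbase hmul
  -- now divide by t^4
  have ht4 : (0:ℝ) < t^4 := by positivity
  have htp : (0:ℝ) < t ^ (p+1) := Real.rpow_pos_of_pos ht0 _
  have hid : Real.log t / t ^ (p + 1) = Real.log t * t ^ (3 - p) / t^4 := by
    have : t ^ (p+1) * t ^ (3-p) = t^4 := by
      rw [← Real.rpow_add ht0]
      rw [show p + 1 + (3 - p) = (4:ℝ) by ring]
      rw [show ((4:ℝ)) = ((4:ℕ):ℝ) by norm_num, Real.rpow_natCast]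
    field_simp
    rw [mul_assoc, this]
  rw [hid, ge_iff_le, mul_one_div, div_le_div_iff₀ ht4 ht4]
  nlinarith [hkey, ht4]
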